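/- Let m ≥ 2 and let u_1,…,u_m and s_1,…,s_m be integers. Then there exist integers c_1,…,c_m such that c_1·s_1 + ⋯ + c_m·s_m = 0 and gcd(u_1 − c_1, …, u_m − c_m) = 1. -/

import Mathlib

/-- Auxiliary: an integer Finset.gcd that divides 1 equals 1. -/
lemma aux_gcd_eq_one {m : ℕ} (f : Fin m → ℤ)
    (h : Finset.univ.gcd f ∣ 1) : Finset.univ.gcd f = 1 := by
  have h1 : IsUnit (Finset.univ.gcd f) := isUnit_of_dvd_one h
  have h2 : normalize (Finset.univ.gcd f) = Finset.univ.gcd f :=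
    Finset.normalize_gcd
  rw [← h2, normalize_eq_one]
  exact h1

/-- Lemma (a): given integers `u i` and `s i` (`m ≥ 2`), there exist integers `c i`
with `∑ c i * s i = 0` and `gcd (u i - c i) = 1`. -/
theorem stmt_11 (m : ℕ) (hm : 2 ≤ m) (u s : Fin m → ℤ) :
    ∃ c : Fin m → ℤ, (∑ i, c i * s i) = 0 ∧
      Finset.univ.gcd (fun i => u i - c i) = 1 := by
  set i0 : Fin m := ⟨0, by omega⟩ with hi0
  set i1 : Fin m := ⟨1, by omega⟩ with hi1
  have hne : i0 ≠ i1 := by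
    simp [hi0, hi1, Fin.ext_iff]
  by_cases hs0 : s i0 = 0
  · -- easy case: set c i0 = u i0 - 1, rest 0
    refine ⟨fun i => if i = i0 then u i0 - 1 else 0, ?_, ?_⟩
    · apply Finset.sum_eq_zero
      intro i _
      by_cases h : i = i0
      · simp [h, hs0]
      · simp [h]
    · apply aux_gcd_eq_one
      have hd : Finset.univ.gcd
          (fun i => u i - if i = i0 then u i0 - 1 else 0) ∣
          (u i0 - if i0 = i0 then u i0 - 1 else 0) :=
        Finset.gcd_dvd (Finset.mem_univ i0)
      simpa using hd
  · -- main case: s i0 ≠ 0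
    set g : ℤ := (Int.gcd (s i0) (s i1) : ℤ) with hg
    have hgne : g ≠ 0 := by
      simp only [hg]
      exact_mod_cast fun h => hs0 (Int.gcd_eq_zero_iff.mp (by exact_mod_cast h)).1
    have hgpos : 0 < Int.gcd (s i0) (s i1) := by
      rcases Nat.eq_zero_or_pos (Int.gcd (s i0) (s i1)) with h | h
      · exact absurd (Int.gcd_eq_zero_iff.mp h).1 hs0
      · exact h
    have hd0 : g ∣ s i0 := Int.gcd_dvd_left _ _
    have hd1 : g ∣ s i1 := Int.gcd_dvd_right _ _
    obtain ⟨a, ha⟩ := hd0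
    obtain ⟨b, hb⟩ := hd1
    set q1 : ℤ := s i1 / g with hq1
    set q2 : ℤ := -(s i0 / g) with hq2
    have hq1b : q1 = b := by rw [hq1, hb, Int.mul_ediv_cancel_left _ hgne]
    have hq2a : q2 = -a := by rw [hq2, ha, Int.mul_ediv_cancel_left _ hgne]
    have hcop : IsCoprime q1 q2 := by
      have h0 := Int.gcd_div_gcd_div_gcd hgpos
      have h1 : IsCoprime (s i0 / g) (s i1 / g) :=
        Int.isCoprime_iff_gcd_eq_one.mpr h0
      rw [hq1, hq2]
      exact (h1.symm).neg_right
    obtain ⟨r1, r2, hr⟩ := hcop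
    set t : ℤ := 1 - (r1 * u i0 + r2 * u i1) with ht
    have e10 : i1 ≠ i0 := fun h => hne h.symm
    set c : Fin m → ℤ :=
      fun i => if i = i0 then -(t * q1) else if i = i1 then -(t * q2) else 0 with hc
    have hc0 : c i0 = -(t * q1) := by simp [hc]
    have hc1 : c i1 = -(t * q2) := by simp [hc, e10]
    have hcoth : ∀ i, i ≠ i0 → i ≠ i1 → c i = 0 := by
      intro i h1 h2; simp [hc, h1, h2]
    refine ⟨c, ?_, ?_⟩
    · have hsub : ({i0, i1} : Finset (Fin m)) ⊆ Finset.univ :=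
        Finset.subset_univ _
      rw [← Finset.sum_subset hsub]
      · rw [Finset.sum_pair hne, hc0, hc1, hq1b, hq2a, ha, hb]
        ring
      · intro i _ hi
        simp only [Finset.mem_insert, Finset.mem_singleton, not_or] at hi
        rw [hcoth i hi.1 hi.2, zero_mul]
    · apply aux_gcd_eq_one
      set f : Fin m → ℤ := fun i => u i - c i with hf
      have hdvd0 : Finset.univ.gcd f ∣ f i0 := Finset.gcd_dvd (Finset.mem_univ i0)
      have hdvd1 : Finset.univ.gcd f ∣ f i1 := Finset.gcd_dvd (Finset.mem_univ i1)
      have hf0 : f i0 = u i0 + t * q1 := by rw [hf]; simp only; rw [hc0]; ring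
      have hf1 : f i1 = u i1 + t * q2 := by rw [hf]; simp only; rw [hc1]; ring
      have key : r1 * f i0 + r2 * f i1 = 1 := by
        rw [hf0, hf1, ht]
        linear_combination (1 - (r1 * u i0 + r2 * u i1)) * hr
      calc Finset.univ.gcd f ∣ r1 * f i0 + r2 * f i1 :=
            dvd_add (Dvd.dvd.mul_left hdvd0 r1) (Dvd.dvd.mul_left hdvd1 r2)
        _ = 1 := key
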